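/- Let X be a normal space with covering dimension at most n, let U₁,…,U_{n+1} be open subsets of X and F₁,…,F_{n+1} closed subsets with F_i ⊆ U_i for each i. Then there exist open sets V₁,…,V_{n+1} and W₁,…,W_{n+1} with F_i ⊆ V_i ⊆ closure(V_i) ⊆ W_i ⊆ U_i for all i, and the intersection over i of (closure(W_i) \ V_i) is empty. -/
import Mathlib


/-- Covering dimension at most `n`: every open cover has an open refinement in which
each point lies in at most `n + 1` members. -/
def CovDimLE (X : Type) [TopologicalSpace X] (n : ℕ) : Prop :=
  ∀ 𝒰 : Set (Set X), (∀ U ∈ 𝒰, IsOpen U) → ⋃₀ 𝒰 = Set.univ →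
    ∃ 𝒱 : Set (Set X), (∀ V ∈ 𝒱, IsOpen V) ∧ ⋃₀ 𝒱 = Set.univ ∧
      (∀ V ∈ 𝒱, ∃ U ∈ 𝒰, V ⊆ U) ∧
      ∀ x : X, {V ∈ 𝒱 | x ∈ V}.Finite ∧ {V ∈ 𝒱 | x ∈ V}.ncard ≤ n + 1

theorem stmt_1 (n : ℕ) (X : Type) [TopologicalSpace X] [NormalSpace X]
    (hdim : CovDimLE X n)
    (U : Fin (n + 1) → Set X) (hU : ∀ i, IsOpen (U i))
    (F : Fin (n + 1) → Set X) (hF : ∀ i, IsClosed (F i))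
    (hFU : ∀ i, F i ⊆ U i) :
    ∃ V W : Fin (n + 1) → Set X,
      (∀ i, IsOpen (V i)) ∧ (∀ i, IsOpen (W i)) ∧
      (∀ i, F i ⊆ V i) ∧ (∀ i, closure (V i) ⊆ W i) ∧ (∀ i, W i ⊆ U i) ∧
      ⋂ i, (closure (W i) \ V i) = ∅ := by
  classical
  -- Step 1: squeeze `F i ⊆ B i ⊆ closure (B i) ⊆ U i`.
  have hB : ∀ i, ∃ B : Set X, IsOpen B ∧ F i ⊆ B ∧ closure B ⊆ U i := fun i =>
    normal_exists_closure_subset (hF i) (hU i) (hFU i)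
  choose B hBo hFB hBU using hB
  -- Step 2: the cover `C f`.
  set C : (Fin (n + 1) → Bool) → Set X :=
    fun f => ⋂ i, (if f i then U i else (closure (B i))ᶜ) with hCdef
  have hCo : ∀ f, IsOpen (C f) := by
    intro f
    refine isOpen_iInter_of_finite fun i => ?_
    by_cases h : f i <;> simp [h, hU i, (isClosed_closure (s := B i)).isOpen_compl]
  have hCmem : ∀ f i, f i = true → C f ⊆ U i := by
    intro f i hfi
    intro x hx
    have := Set.mem_iInter.1 hx i
    rwa [hfi, if_pos rfl] at this
  have hCmem' : ∀ f i, f i = false → C f ⊆ (closure (B i))ᶜ := by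
    intro f i hfi x hx
    have := Set.mem_iInter.1 hx i
    rwa [hfi] at this
  have hCcov : ⋃₀ Set.range C = Set.univ := by
    ext x
    simp only [Set.mem_sUnion, Set.mem_range, Set.mem_univ, iff_true]
    refine ⟨C (fun i => decide (x ∈ closure (B i))), ⟨_, rfl⟩, ?_⟩
    refine Set.mem_iInter.2 fun i => ?_
    by_cases h : x ∈ closure (B i)
    · rw [if_pos (by simpa using h)]
      exact hBU i h
    · rw [if_neg (by simpa using h)]
      exact h
  obtain ⟨𝒱, h𝒱o, h𝒱cov, h𝒱ref, h𝒱fin⟩ :=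
    hdim (Set.range C) (by rintro _ ⟨f, rfl⟩; exact hCo f) hCcov
  -- assign to each `V ∈ 𝒱` a function `g V` with `V ⊆ C (g V)`.
  have hgex : ∀ V ∈ 𝒱, ∃ f, V ⊆ C f := by
    intro V hV
    obtain ⟨u, hu, hVu⟩ := h𝒱ref V hV
    obtain ⟨f, rfl⟩ := hu
    exact ⟨f, hVu⟩
  choose! g hg using hgex
  -- the finite open cover `D'' f`.
  set D'' : (Fin (n + 1) → Bool) → Set X := fun f => ⋃₀ {V | V ∈ 𝒱 ∧ g V = f} with hD''def
  have hD''o : ∀ f, IsOpen (D'' f) := fun f => isOpen_sUnion fun V hV => h𝒱o V hV.1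
  have hD''C : ∀ f, D'' f ⊆ C f := by
    rintro f x ⟨V, ⟨hV𝒱, rfl⟩, hxV⟩
    exact hg V hV𝒱 hxV
  have hD''cov : ⋃ f, D'' f = Set.univ := by
    ext x
    simp only [Set.mem_iUnion, Set.mem_univ, iff_true]
    have : x ∈ ⋃₀ 𝒱 := h𝒱cov ▸ Set.mem_univ x
    obtain ⟨V, hV𝒱, hxV⟩ := this
    exact ⟨g V, V, ⟨hV𝒱, rfl⟩, hxV⟩
  -- shrink: `closure (D f) ⊆ D'' f`, still a cover.
  obtain ⟨D, hDcov, hDo, hDcl⟩ :=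
    exists_iUnion_eq_closure_subset hD''o (fun x => Set.toFinite _) hD''cov
  -- choose a distinguished true coordinate for each nonzero `f`.
  set cc : (Fin (n + 1) → Bool) → Fin (n + 1) :=
    fun f => if h : ∃ j, f j = true then h.choose else 0 with hccdef
  have hcc : ∀ (f : Fin (n + 1) → Bool) (j : Fin (n + 1)), f j = true → f (cc f) = true := by
    intro f j hj
    have h : ∃ j, f j = true := ⟨j, hj⟩
    have hccf : cc f = (if h' : ∃ j, f j = true then h'.choose else 0) := rfl
    rw [hccf, dif_pos h]
    exact h.choose_spec
  -- the core open sets `Vv i`.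
  set Vv : Fin (n + 1) → Set X :=
    fun i => B i ∪ ⋃ f ∈ {f : Fin (n + 1) → Bool | f (cc f) = true ∧ cc f = i}, D f with hVvdef
  have hVvo : ∀ i, IsOpen (Vv i) :=
    fun i => (hBo i).union (isOpen_biUnion fun f _ => hDo f)
  have hFVv : ∀ i, F i ⊆ Vv i := fun i => (hFB i).trans Set.subset_union_left
  -- closure bound for `Vv i`.
  have hVvcl : ∀ i, closure (Vv i) ⊆
      closure (B i) ∪ ⋃ f ∈ {f : Fin (n + 1) → Bool | f (cc f) = true ∧ cc f = i}, closure (D f) := by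
    intro i
    refine closure_minimal (Set.union_subset_union subset_closure ?_) ?_
    · exact Set.iUnion₂_mono fun f _ => subset_closure
    · exact IsClosed.union isClosed_closure
        ((Set.toFinite _).isClosed_biUnion fun f _ => isClosed_closure)
  have hVvU : ∀ i, closure (Vv i) ⊆ U i := by
    intro i
    refine (hVvcl i).trans (Set.union_subset (hBU i) ?_)
    refine Set.iUnion₂_subset fun f hf => ?_
    have : f i = true := hf.2 ▸ hf.1
    exact (hDcl f).trans ((hD''C f).trans (hCmem f i this))
  -- key step: the frontiers of the `Vv i` have empty intersection.
  have hkey : (⋂ i, (closure (Vv i) \ Vv i)) = ∅ := by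
    by_contra h
    obtain ⟨x, hx⟩ := Set.nonempty_iff_ne_empty.2 h
    have hx' : ∀ i, x ∈ closure (Vv i) ∧ x ∉ Vv i := by
      intro i
      have := Set.mem_iInter.1 hx i
      exact ⟨this.1, this.2⟩
    -- `x` lies in some `D g0`.
    have : x ∈ ⋃ f, D f := hDcov ▸ Set.mem_univ x
    obtain ⟨g0, hxg0⟩ := Set.mem_iUnion.1 this
    -- `g0` must be identically false.
    have hg0false : ∀ j, g0 j = false := by
      intro j
      by_contra hj
      have hj' : g0 j = true := by
        cases hgj : g0 j
        · exact absurd hgj hj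
        · rfl
      have h1 : g0 (cc g0) = true := hcc g0 j hj'
      have : x ∈ Vv (cc g0) := Set.mem_union_right _ <|
        Set.mem_biUnion (show g0 ∈ {f | f (cc f) = true ∧ cc f = cc g0} from ⟨h1, rfl⟩) hxg0
      exact (hx' (cc g0)).2 this
    -- hence `x` is outside every `closure (B j)`.
    have hxB : ∀ j, x ∉ closure (B j) := by
      intro j
      have : x ∈ C g0 := hD''C g0 (hDcl g0 (subset_closure hxg0))
      exact hCmem' g0 j (hg0false j) this
    -- witnesses: for each `i` a member of `𝒱` containing `x` assigned to some `f` with `cc f = i`.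
    have hwit : ∀ i : Fin (n + 1), ∃ V, (V ∈ 𝒱 ∧ x ∈ V) ∧ (g V) (cc (g V)) = true ∧ cc (g V) = i := by
      intro i
      have hxcl := (hx' i).1
      have := hVvcl i hxcl
      rcases this with hB' | hD'
      · exact absurd hB' (hxB i)
      · obtain ⟨f, hf, hxf⟩ := Set.mem_iUnion₂.1 hD'
        have : x ∈ D'' f := hDcl f hxf
        obtain ⟨V, ⟨hV𝒱, hgV⟩, hxV⟩ := this
        exact ⟨V, ⟨hV𝒱, hxV⟩, by rw [hgV]; exact ⟨hf.1, hf.2⟩⟩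
    choose Vi hVi hVitrue using hwit
    -- the member of `𝒱` containing `x` assigned to `g0`.
    have hx0 : x ∈ D'' g0 := hDcl g0 (subset_closure hxg0)
    obtain ⟨V0, ⟨hV0𝒱, hgV0⟩, hxV0⟩ := hx0
    -- build `n + 2` distinct members of `𝒱` containing `x`.
    have hViinj : Function.Injective Vi := by
      intro i j hij
      have h1 := (hVitrue i).2
      have h2 := (hVitrue j).2
      rw [hij] at h1
      exact h1.symm.trans h2
    have hV0notin : V0 ∉ Set.range Vi := by
      rintro ⟨i, rfl⟩
      have := (hVitrue i).1
      rw [hgV0] at this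
      rw [hg0false (cc g0)] at this
      exact Bool.false_ne_true this
    set T : Set (Set X) := {V | V ∈ 𝒱 ∧ x ∈ V} with hTdef
    have hTfin : T.Finite := (h𝒱fin x).1
    have hTcard : T.ncard ≤ n + 1 := (h𝒱fin x).2
    have hsub : insert V0 (Set.range Vi) ⊆ T := by
      rintro V (rfl | ⟨i, rfl⟩)
      · exact ⟨hV0𝒱, hxV0⟩
      · exact ⟨(hVi i).1, (hVi i).2⟩
    have hrangecard : (Set.range Vi).ncard = n + 1 := by
      rw [← Nat.card_coe_set_eq, Nat.card_range_of_injective hViinj, Nat.card_eq_fintype_card,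
        Fintype.card_fin]
    have hinscard : (insert V0 (Set.range Vi)).ncard = n + 2 := by
      rw [Set.ncard_insert_of_notMem hV0notin (Set.finite_range Vi), hrangecard]
    have := Set.ncard_le_ncard hsub hTfin
    rw [hinscard] at this
    omega
  -- thicken the frontiers to open sets with empty intersection.
  have hKcl : ∀ i, IsClosed (closure (Vv i) \ Vv i) :=
    fun i => isClosed_closure.sdiff (hVvo i)
  have hKcov : ⋃ i, (closure (Vv i) \ Vv i)ᶜ = Set.univ := by
    ext x
    simp only [Set.mem_iUnion, Set.mem_compl_iff, Set.mem_univ, iff_true]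
    by_contra h
    push_neg at h
    have : x ∈ ⋂ i, (closure (Vv i) \ Vv i) := Set.mem_iInter.2 h
    rw [hkey] at this
    exact this
  obtain ⟨Q, hQcov, hQo, hQcl⟩ :=
    exists_iUnion_eq_closure_subset (u := fun i => (closure (Vv i) \ Vv i)ᶜ)
      (fun i => (hKcl i).isOpen_compl) (fun x => Set.toFinite _) hKcov
  set P : Fin (n + 1) → Set X := fun i => (closure (Q i))ᶜ with hPdef
  have hPo : ∀ i, IsOpen (P i) := fun i => isClosed_closure.isOpen_compl
  have hKP : ∀ i, closure (Vv i) \ Vv i ⊆ P i := by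
    intro i y hy
    intro hyQ
    exact (hQcl i hyQ) hy
  have hPempty : ⋂ i, P i = ∅ := by
    ext x
    simp only [Set.mem_iInter, Set.mem_empty_iff_false, iff_false]
    intro h
    have : x ∈ ⋃ i, Q i := hQcov ▸ Set.mem_univ x
    obtain ⟨i, hi⟩ := Set.mem_iUnion.1 this
    exact h i (subset_closure hi)
  -- choose `W i` between `closure (Vv i)` and `(Vv i ∪ P i) ∩ U i`.
  have hWex : ∀ i, ∃ Wi : Set X, IsOpen Wi ∧ closure (Vv i) ⊆ Wi ∧
      closure Wi ⊆ (Vv i ∪ P i) ∩ U i := by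
    intro i
    refine normal_exists_closure_subset isClosed_closure
      (((hVvo i).union (hPo i)).inter (hU i)) ?_
    intro y hy
    refine ⟨?_, hVvU i hy⟩
    by_cases h : y ∈ Vv i
    · exact Or.inl h
    · exact Or.inr (hKP i ⟨hy, h⟩)
  choose W hWo hVvW hWcl using hWex
  refine ⟨Vv, W, hVvo, hWo, hFVv, hVvW, ?_, ?_⟩
  · intro i
    exact fun y hy => ((hWcl i (subset_closure hy)).2)
  · apply Set.eq_empty_iff_forall_notMem.2
    intro x hx
    have hxP : ∀ i, x ∈ P i := by
      intro i
      have hxi := Set.mem_iInter.1 hx i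
      have h1 : x ∈ (Vv i ∪ P i) ∩ U i := hWcl i hxi.1
      rcases h1.1 with h | h
      · exact absurd h hxi.2
      · exact h
    have : x ∈ ⋂ i, P i := Set.mem_iInter.2 hxP
    rw [hPempty] at this
    exact this
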